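/- For every partition λ of length l, F_λ = t^{n(λ)} in ℤ[t], where n(λ) = Σ_{i=1}^{l} (i−1) λᵢ. -/

import Mathlib

open Finset Polynomial

/-- `F_λ ∈ ℤ[t]`: the coefficient of `z^{|λ|} w₁^{λ₁} ⋯ w_l^{λ_l}` in the formal product
`∏_{i=1}^{l} (Σ_{k≥0} z^k wᵢ^k) · ∏_{1≤i<j≤l} (1 − w_j/wᵢ)(Σ_{k≥0} t^k (w_j/wᵢ)^k)`.
It is computed by expanding the product: `km.1 i` is the exponent chosen from the `i`-th
factor `Σ_k z^k wᵢ^k`, and for a pair `p = (i,j)` with `i < j`, `km.2 p` is the exponent of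
the ratio `w_j/wᵢ`, whose coefficient in `(1 − w_j/wᵢ)(Σ_k t^k (w_j/wᵢ)^k)` is `1` for
exponent `0` and `t^k − t^{k−1}` for exponent `k ≥ 1`.  The first condition discards the
irrelevant entries of `km.2`, the second matches the exponent of `z`, and the third matches
the exponent of each `wᵢ`.  Only finitely many terms contribute, so the `finsum` is the
honest coefficient. -/
noncomputable def Fhl (lam : List ℕ) : Polynomial ℤ :=
  ∑ᶠ km : (Fin lam.length → ℕ) × (Fin lam.length × Fin lam.length → ℕ),
    if (∀ p : Fin lam.length × Fin lam.length, ¬ p.1 < p.2 → km.2 p = 0) ∧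
        (∑ i, km.1 i) = lam.sum ∧
        (∀ i : Fin lam.length,
          (km.1 i : ℤ) + (∑ j, if j < i then (km.2 (j, i) : ℤ) else 0)
            - (∑ j, if i < j then (km.2 (i, j) : ℤ) else 0) = (lam.get i : ℤ))
      then ∏ p : Fin lam.length × Fin lam.length,
        (if p.1 < p.2 then
          (if km.2 p = 0 then 1 else X ^ (km.2 p) - X ^ (km.2 p - 1)) else 1)
      else 0

noncomputable def hc (k : ℕ) : Polynomial ℤ := if k = 0 then 1 else X ^ k - X ^ (k - 1)

lemma hc_sum (N : ℕ) : ∑ k ∈ Finset.range (N + 1), hc k = X ^ N := by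
  induction N with
  | zero => simp [hc]
  | succ n ih =>
    rw [Finset.sum_range_succ, ih]
    simp only [hc, Nat.succ_ne_zero, if_false, Nat.add_sub_cancel]
    ring

def Cnd (n : ℕ) (lv : Fin n → ℕ)
    (km : (Fin n → ℕ) × (Fin n × Fin n → ℕ)) : Prop :=
  (∀ p : Fin n × Fin n, ¬ p.1 < p.2 → km.2 p = 0) ∧
    (∑ i, km.1 i) = (∑ i, lv i) ∧
    (∀ i : Fin n,
      (km.1 i : ℤ) + (∑ j, if j < i then (km.2 (j, i) : ℤ) else 0)
        - (∑ j, if i < j then (km.2 (i, j) : ℤ) else 0) = (lv i : ℤ))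

instance (n : ℕ) (lv : Fin n → ℕ) (km : (Fin n → ℕ) × (Fin n × Fin n → ℕ)) :
    Decidable (Cnd n lv km) := by unfold Cnd; infer_instance

noncomputable def trm (n : ℕ) (m : Fin n × Fin n → ℕ) : Polynomial ℤ :=
  ∏ p : Fin n × Fin n, (if p.1 < p.2 then hc (m p) else 1)

noncomputable def G (n : ℕ) (lv : Fin n → ℕ) : Polynomial ℤ :=
  ∑ᶠ km : (Fin n → ℕ) × (Fin n × Fin n → ℕ),
    if Cnd n lv km then trm n km.2 else 0

lemma Fhl_eq_G (lam : List ℕ) : Fhl lam = G lam.length lam.get := by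
  have hs : lam.sum = ∑ i, lam.get i := by
    conv_lhs => rw [← List.ofFn_get lam]
    rw [List.sum_ofFn]
  unfold Fhl G
  apply finsum_congr
  intro km
  apply if_congr
  · unfold Cnd
    rw [hs]
  · rfl
  · rfl

lemma m_bound (n : ℕ) (lv : Fin n → ℕ) (k : Fin n → ℕ) (m : Fin n × Fin n → ℕ)
    (hcond : Cnd n lv (k, m)) (a b : Fin n) (hab : a < b) :
    m (a, b) ≤ ∑ i, lv i := by
  obtain ⟨h1, h2, h3⟩ := hcond
  classical
  set T : Finset (Fin n) := Finset.univ.filter (fun i => b ≤ i) with hT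
  have E : ∑ i ∈ T, (((k i : ℤ) + (∑ j, if j < i then (m (j, i) : ℤ) else 0)
      - (∑ j, if i < j then (m (i, j) : ℤ) else 0))) = ∑ i ∈ T, (lv i : ℤ) :=
    Finset.sum_congr rfl fun i _ => h3 i
  have EP : ∑ i ∈ T, (∑ j, if j < i then (m (j, i) : ℤ) else 0)
      = ∑ p : Fin n × Fin n, (if b ≤ p.2 ∧ p.1 < p.2 then (m p : ℤ) else 0) := by
    rw [Finset.sum_filter, Fintype.sum_prod_type]
    rw [Finset.sum_comm]
    apply Finset.sum_congr rfl
    intro i _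
    by_cases hb : b ≤ i
    · rw [if_pos hb]
      apply Finset.sum_congr rfl
      intro j _
      simp [hb]
    · rw [if_neg hb]
      symm
      apply Finset.sum_eq_zero
      intro j _
      simp [hb]
  have EQ : ∑ i ∈ T, (∑ j, if i < j then (m (i, j) : ℤ) else 0)
      = ∑ p : Fin n × Fin n, (if b ≤ p.1 ∧ p.1 < p.2 then (m p : ℤ) else 0) := by
    rw [Finset.sum_filter, Fintype.sum_prod_type]
    apply Finset.sum_congr rfl
    intro i _
    by_cases hb : b ≤ i
    · rw [if_pos hb]
      apply Finset.sum_congr rfl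
      intro j _
      simp [hb]
    · rw [if_neg hb]
      symm
      apply Finset.sum_eq_zero
      intro j _
      simp [hb]
  have hsplit : ∀ p : Fin n × Fin n,
      (if b ≤ p.2 ∧ p.1 < p.2 then (m p : ℤ) else 0)
      = (if b ≤ p.1 ∧ p.1 < p.2 then (m p : ℤ) else 0)
        + (if (b ≤ p.2 ∧ p.1 < p.2) ∧ ¬(b ≤ p.1 ∧ p.1 < p.2) then (m p : ℤ) else 0) := by
    intro p
    rcases p with ⟨u, v⟩
    simp only [Fin.lt_def, Fin.le_def]
    split_ifs <;> omega
  have hsingle : (m (a, b) : ℤ) ≤ ∑ p : Fin n × Fin n,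
      (if (b ≤ p.2 ∧ p.1 < p.2) ∧ ¬(b ≤ p.1 ∧ p.1 < p.2) then (m p : ℤ) else 0) := by
    have := Finset.single_le_sum (f := fun p : Fin n × Fin n =>
      (if (b ≤ p.2 ∧ p.1 < p.2) ∧ ¬(b ≤ p.1 ∧ p.1 < p.2) then (m p : ℤ) else 0))
      (fun p _ => by positivity) (Finset.mem_univ (a, b))
    simpa [hab, not_le.2 hab] using this
  have hk : (0 : ℤ) ≤ ∑ i ∈ T, (k i : ℤ) := Finset.sum_nonneg fun i _ => by positivity
  have hlv : ∑ i ∈ T, (lv i : ℤ) ≤ ∑ i, (lv i : ℤ) :=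
    Finset.sum_le_sum_of_subset_of_nonneg (Finset.subset_univ T)
      (fun i _ _ => by positivity)
  have final : (m (a, b) : ℤ) ≤ ∑ i, (lv i : ℤ) := by
    rw [Finset.sum_sub_distrib, Finset.sum_add_distrib] at E
    rw [EP, EQ] at E
    rw [Finset.sum_congr rfl (fun p _ => hsplit p), Finset.sum_add_distrib] at E
    linarith
  exact_mod_cast final

lemma G_eq_sum (n : ℕ) (lv : Fin n → ℕ) (B : ℕ) (hB : (∑ i, lv i) ≤ B) :
    G n lv = ∑ km ∈ (Fintype.piFinset fun _ : Fin n => Finset.range (B + 1)) ×ˢ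
        (Fintype.piFinset fun _ : Fin n × Fin n => Finset.range (B + 1)),
      if Cnd n lv km then trm n km.2 else 0 := by
  apply finsum_eq_sum_of_support_subset
  intro km hkm
  simp only [Function.mem_support, ne_eq, ite_eq_right_iff, not_forall] at hkm
  obtain ⟨hcond, -⟩ := hkm
  obtain ⟨k, m⟩ := km
  simp only [Finset.coe_product, Set.mem_prod, Finset.mem_coe, Fintype.mem_piFinset,
    Finset.mem_range]
  constructor
  · intro i
    have : k i ≤ ∑ j, k j := Finset.single_le_sum (fun j _ => Nat.zero_le _) (Finset.mem_univ i)
    have h2 : (∑ j, k j) = ∑ j, lv j := hcond.2.1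
    omega
  · intro p
    rcases p with ⟨u, v⟩
    by_cases hp : u < v
    · have := m_bound n lv k m hcond u v hp
      omega
    · have hz : m (u, v) = 0 := hcond.1 (u, v) hp
      omega

lemma col (r : ℕ) : ∀ M N : ℕ, N ≤ M →
    ∑ x ∈ (Fintype.piFinset fun _ : Fin r => Finset.range (M + 1)).filter
        (fun x => ∑ i, x i ≤ N),
      ∏ i : Fin r, X ^ ((i : ℕ) * x i) * hc (x i) = (X : Polynomial ℤ) ^ (r * N) := by
  induction r with
  | zero =>
    intro M N hN
    rw [Finset.filter_true_of_mem (fun x _ => by simp)]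
    simp
  | succ r ih =>
    intro M N hN
    have key : ∑ q ∈ ((Fintype.piFinset fun _ : Fin r => Finset.range (M + 1)) ×ˢ
          Finset.range (M + 1)).filter (fun q => (∑ i, q.1 i) + q.2 ≤ N),
        (∏ i : Fin r, X ^ ((i : ℕ) * q.1 i) * hc (q.1 i)) * (X ^ (r * q.2) * hc q.2)
        = (X : Polynomial ℤ) ^ ((r + 1) * N) := by
      rw [Finset.sum_filter, Finset.sum_product_right]
      have inner : ∀ y ∈ Finset.range (M + 1),
          (∑ x ∈ Fintype.piFinset fun _ : Fin r => Finset.range (M + 1),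
            if (∑ i, x i) + y ≤ N then
              (∏ i : Fin r, X ^ ((i : ℕ) * x i) * hc (x i)) * (X ^ (r * y) * hc y)
            else 0)
          = if y ≤ N then (X : Polynomial ℤ) ^ (r * N) * hc y else 0 := by
        intro y _
        by_cases hy : y ≤ N
        · rw [if_pos hy]
          have hiff : ∀ x : Fin r → ℕ, ((∑ i, x i) + y ≤ N) ↔ (∑ i, x i ≤ N - y) := by
            intro x; omega
          simp only [hiff]
          rw [← Finset.sum_filter, ← Finset.sum_mul, ih M (N - y) (by omega)]
          rw [← mul_assoc, ← pow_add]
          congr 2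
          rw [← Nat.mul_add]
          congr 1
          omega
        · rw [if_neg hy]
          apply Finset.sum_eq_zero
          intro x _
          rw [if_neg (by omega)]
      rw [Finset.sum_congr rfl inner, ← Finset.sum_filter]
      have hrange : (Finset.range (M + 1)).filter (fun y => y ≤ N) = Finset.range (N + 1) := by
        ext y; simp; omega
      rw [hrange, ← Finset.mul_sum, hc_sum, ← pow_add]
      congr 1
      ring
    rw [← key]
    apply Finset.sum_nbij' (i := fun x => (Fin.init x, x (Fin.last r)))
      (j := fun q => Fin.snoc q.1 q.2)
    · intro x hx
      simp only [Finset.mem_filter, Fintype.mem_piFinset] at hx ⊢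
      refine ⟨Finset.mem_product.2 ⟨?_, ?_⟩, ?_⟩
      · exact Fintype.mem_piFinset.2 fun i => hx.1 _
      · exact hx.1 _
      · have := hx.2
        rw [Fin.sum_univ_castSucc] at this
        exact this
    · intro q hq
      simp only [Finset.mem_filter, Finset.mem_product, Fintype.mem_piFinset] at hq ⊢
      constructor
      · intro i
        refine Fin.lastCases ?_ ?_ i
        · simpa using hq.1.2
        · intro j; simpa using hq.1.1 j
      · rw [Fin.sum_univ_castSucc]
        simpa using hq.2
    · intro x _
      exact Fin.snoc_init_self x
    · intro q _
      simp
    · intro x _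
      rw [Fin.prod_univ_castSucc]
      simp only [Fin.init, Fin.coe_castSucc, Fin.val_last]

lemma trm_succ (n : ℕ) (m : Fin (n+1) × Fin (n+1) → ℕ) :
    trm (n+1) m = (∏ i : Fin n, hc (m (i.castSucc, Fin.last n)))
      * trm n (fun p => m (p.1.castSucc, p.2.castSucc)) := by
  unfold trm
  rw [Fintype.prod_prod_type, Fintype.prod_prod_type, Fin.prod_univ_castSucc]
  have hlast : (∏ j : Fin (n+1), if (Fin.last n) < j then hc (m (Fin.last n, j)) else 1) = 1 :=
    Finset.prod_eq_one (fun j _ => if_neg (not_lt.2 (Fin.le_last j)))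
  rw [hlast, mul_one]
  have hrow : ∀ i : Fin n,
      (∏ j : Fin (n+1), if i.castSucc < j then hc (m (i.castSucc, j)) else 1)
      = (∏ j : Fin n, if i < j then hc (m (i.castSucc, j.castSucc)) else 1)
        * hc (m (i.castSucc, Fin.last n)) := by
    intro i
    rw [Fin.prod_univ_castSucc]
    simp [Fin.castSucc_lt_castSucc_iff, Fin.castSucc_lt_last]
  rw [Finset.prod_congr rfl (fun i _ => hrow i), Finset.prod_mul_distrib]
  ring

lemma cnd_succ_iff (n : ℕ) (lv : Fin (n+1) → ℕ) (k : Fin (n+1) → ℕ)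
    (m : Fin (n+1) × Fin (n+1) → ℕ) :
    Cnd (n+1) lv (k, m) ↔
      ((∑ i : Fin n, m (i.castSucc, Fin.last n)) ≤ lv (Fin.last n)
       ∧ k (Fin.last n) = lv (Fin.last n) - ∑ i : Fin n, m (i.castSucc, Fin.last n)
       ∧ (∀ j : Fin (n+1), m (Fin.last n, j) = 0)
       ∧ Cnd n (fun i => lv i.castSucc + m (i.castSucc, Fin.last n))
           ((fun i => k i.castSucc), (fun p => m (p.1.castSucc, p.2.castSucc)))) := by
  have declt : ∀ i : Fin n,
      (∑ j : Fin (n+1), if j < i.castSucc then (m (j, i.castSucc) : ℤ) else 0)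
      = ∑ j : Fin n, if j < i then (m (j.castSucc, i.castSucc) : ℤ) else 0 := by
    intro i
    rw [Fin.sum_univ_castSucc]
    simp [Fin.castSucc_lt_castSucc_iff, not_lt.2 (Fin.le_last i.castSucc)]
  have decgt : ∀ i : Fin n,
      (∑ j : Fin (n+1), if i.castSucc < j then (m (i.castSucc, j) : ℤ) else 0)
      = (∑ j : Fin n, if i < j then (m (i.castSucc, j.castSucc) : ℤ) else 0)
        + (m (i.castSucc, Fin.last n) : ℤ) := by
    intro i
    rw [Fin.sum_univ_castSucc]
    simp [Fin.castSucc_lt_castSucc_iff, Fin.castSucc_lt_last]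
  have declast : (∑ j : Fin (n+1), if j < Fin.last n then (m (j, Fin.last n) : ℤ) else 0)
      = ((∑ j : Fin n, m (j.castSucc, Fin.last n) : ℕ) : ℤ) := by
    rw [Fin.sum_univ_castSucc]
    simp [Fin.castSucc_lt_last]
  have decgtlast : (∑ j : Fin (n+1), if Fin.last n < j then (m (Fin.last n, j) : ℤ) else 0)
      = 0 := by
    apply Finset.sum_eq_zero
    intro j _
    exact if_neg (not_lt.2 (Fin.le_last j))
  constructor
  · rintro ⟨c1, c2, c3⟩
    have c2' : (∑ i : Fin (n+1), k i) = ∑ i : Fin (n+1), lv i := c2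
    have hlast : (k (Fin.last n) : ℤ)
        + (∑ j : Fin (n+1), if j < Fin.last n then (m (j, Fin.last n) : ℤ) else 0)
        - (∑ j : Fin (n+1), if Fin.last n < j then (m (Fin.last n, j) : ℤ) else 0)
        = (lv (Fin.last n) : ℤ) := c3 (Fin.last n)
    rw [declast, decgtlast] at hlast
    have hle : (∑ i : Fin n, m (i.castSucc, Fin.last n)) ≤ lv (Fin.last n) := by omega
    have hk : k (Fin.last n) = lv (Fin.last n) - ∑ i : Fin n, m (i.castSucc, Fin.last n) := by
      omega
    refine ⟨hle, hk, fun j => c1 (Fin.last n, j) (not_lt.2 (Fin.le_last j)), ?_, ?_, ?_⟩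
    · intro p hp
      exact c1 (p.1.castSucc, p.2.castSucc) (by simpa [Fin.castSucc_lt_castSucc_iff] using hp)
    · show (∑ i : Fin n, k i.castSucc)
        = ∑ i : Fin n, (lv i.castSucc + m (i.castSucc, Fin.last n))
      rw [Fin.sum_univ_castSucc (f := k), Fin.sum_univ_castSucc (f := lv)] at c2'
      have h2 : ∑ i : Fin n, (lv i.castSucc + m (i.castSucc, Fin.last n))
          = (∑ i : Fin n, lv i.castSucc) + ∑ i : Fin n, m (i.castSucc, Fin.last n) :=
        Finset.sum_add_distrib
      omega
    · intro i
      have c3i : (k i.castSucc : ℤ)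
          + (∑ j : Fin (n+1), if j < i.castSucc then (m (j, i.castSucc) : ℤ) else 0)
          - (∑ j : Fin (n+1), if i.castSucc < j then (m (i.castSucc, j) : ℤ) else 0)
          = (lv i.castSucc : ℤ) := c3 i.castSucc
      rw [declt i, decgt i] at c3i
      show (k i.castSucc : ℤ)
          + (∑ j : Fin n, if j < i then (m (j.castSucc, i.castSucc) : ℤ) else 0)
          - (∑ j : Fin n, if i < j then (m (i.castSucc, j.castSucc) : ℤ) else 0)
          = ((lv i.castSucc + m (i.castSucc, Fin.last n) : ℕ) : ℤ)
      push_cast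
      push_cast at c3i
      linarith
  · rintro ⟨hle, hk, hzero, d1, d2, d3⟩
    have d2' : (∑ i : Fin n, k i.castSucc)
        = ∑ i : Fin n, (lv i.castSucc + m (i.castSucc, Fin.last n)) := d2
    refine ⟨?_, ?_, ?_⟩
    · intro p hp
      rcases p with ⟨u, v⟩
      induction u using Fin.lastCases with
      | last => exact hzero v
      | cast i =>
        induction v using Fin.lastCases with
        | last => exact absurd (Fin.castSucc_lt_last i) hp
        | cast j => exact d1 (i, j) (by simpa [Fin.castSucc_lt_castSucc_iff] using hp)
    · show (∑ i : Fin (n+1), k i) = ∑ i : Fin (n+1), lv i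
      rw [Fin.sum_univ_castSucc (f := k), Fin.sum_univ_castSucc (f := lv)]
      have h2 : ∑ i : Fin n, (lv i.castSucc + m (i.castSucc, Fin.last n))
          = (∑ i : Fin n, lv i.castSucc) + ∑ i : Fin n, m (i.castSucc, Fin.last n) :=
        Finset.sum_add_distrib
      omega
    · intro i
      induction i using Fin.lastCases with
      | last =>
        show (k (Fin.last n) : ℤ)
          + (∑ j : Fin (n+1), if j < Fin.last n then (m (j, Fin.last n) : ℤ) else 0)
          - (∑ j : Fin (n+1), if Fin.last n < j then (m (Fin.last n, j) : ℤ) else 0)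
          = (lv (Fin.last n) : ℤ)
        rw [declast, decgtlast]
        omega
      | cast i =>
        have d3i : (k i.castSucc : ℤ)
          + (∑ j : Fin n, if j < i then (m (j.castSucc, i.castSucc) : ℤ) else 0)
          - (∑ j : Fin n, if i < j then (m (i.castSucc, j.castSucc) : ℤ) else 0)
          = ((lv i.castSucc + m (i.castSucc, Fin.last n) : ℕ) : ℤ) := d3 i
        show (k i.castSucc : ℤ)
          + (∑ j : Fin (n+1), if j < i.castSucc then (m (j, i.castSucc) : ℤ) else 0)
          - (∑ j : Fin (n+1), if i.castSucc < j then (m (i.castSucc, j) : ℤ) else 0)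
          = (lv i.castSucc : ℤ)
        rw [declt i, decgt i]
        push_cast
        push_cast at d3i
        linarith

lemma step (n : ℕ) (lv : Fin (n + 1) → ℕ) :
    G (n + 1) lv = ∑ x ∈ (Fintype.piFinset fun _ : Fin n =>
        Finset.range (lv (Fin.last n) + 1)).filter
        (fun x => ∑ i, x i ≤ lv (Fin.last n)),
      (∏ i, hc (x i)) * G n (fun i => lv i.castSucc + x i) := by
  classical
  have haB : lv (Fin.last n) ≤ ∑ i, lv i :=
    Finset.single_le_sum (fun i _ => Nat.zero_le _) (Finset.mem_univ _)
  have hcs : (∑ i : Fin n, lv i.castSucc) + lv (Fin.last n) = ∑ i, lv i :=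
    (Fin.sum_univ_castSucc lv).symm
  have hGx : ∀ x ∈ (Fintype.piFinset fun _ : Fin n =>
        Finset.range (lv (Fin.last n) + 1)).filter
        (fun x => ∑ i, x i ≤ lv (Fin.last n)),
      (∏ i, hc (x i)) * G n (fun i => lv i.castSucc + x i)
      = ∑ km ∈ (((Fintype.piFinset fun _ : Fin n => Finset.range ((∑ i, lv i) + 1)) ×ˢ
          (Fintype.piFinset fun _ : Fin n × Fin n => Finset.range ((∑ i, lv i) + 1)))).filter
            (fun km => Cnd n (fun i => lv i.castSucc + x i) km),
          (∏ i, hc (x i)) * trm n km.2 := by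
    intro x hx
    rw [Finset.mem_filter] at hx
    have hbx : (∑ i, (lv i.castSucc + x i)) ≤ ∑ i, lv i := by
      rw [Finset.sum_add_distrib]
      omega
    rw [G_eq_sum n _ (∑ i, lv i) hbx, Finset.mul_sum, Finset.sum_filter]
    exact Finset.sum_congr rfl fun km _ => by rw [mul_ite, mul_zero]
  rw [Finset.sum_congr rfl hGx, G_eq_sum (n + 1) lv (∑ i, lv i) le_rfl,
    ← Finset.sum_filter]
  have expand : (∑ q ∈ (((Fintype.piFinset fun _ : Fin n =>
          Finset.range (lv (Fin.last n) + 1)).filter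
          (fun x => ∑ i, x i ≤ lv (Fin.last n))) ×ˢ
        ((Fintype.piFinset fun _ : Fin n => Finset.range ((∑ i, lv i) + 1)) ×ˢ
          (Fintype.piFinset fun _ : Fin n × Fin n => Finset.range ((∑ i, lv i) + 1)))).filter
        (fun q => Cnd n (fun i => lv i.castSucc + q.1 i) q.2),
        (∏ i, hc (q.1 i)) * trm n q.2.2)
      = ∑ x ∈ (Fintype.piFinset fun _ : Fin n =>
          Finset.range (lv (Fin.last n) + 1)).filter
          (fun x => ∑ i, x i ≤ lv (Fin.last n)),
        ∑ km ∈ (((Fintype.piFinset fun _ : Fin n => Finset.range ((∑ i, lv i) + 1)) ×ˢ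
          (Fintype.piFinset fun _ : Fin n × Fin n => Finset.range ((∑ i, lv i) + 1)))).filter
            (fun km => Cnd n (fun i => lv i.castSucc + x i) km),
          (∏ i, hc (x i)) * trm n km.2 := by
    exact Finset.sum_finset_product _ _ _
      (by intro p; simp only [Finset.mem_filter, Finset.mem_product]; tauto)
  rw [← expand]
  apply Finset.sum_nbij'
    (i := fun km : (Fin (n+1) → ℕ) × (Fin (n+1) × Fin (n+1) → ℕ) =>
      ((fun i : Fin n => km.2 (i.castSucc, Fin.last n)),
      ((fun i : Fin n => km.1 i.castSucc),
       (fun p : Fin n × Fin n => km.2 (p.1.castSucc, p.2.castSucc)))))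
    (j := fun q : (Fin n → ℕ) × ((Fin n → ℕ) × (Fin n × Fin n → ℕ)) =>
      ((Fin.snoc q.2.1 (lv (Fin.last n) - ∑ i, q.1 i) : Fin (n+1) → ℕ),
      (fun p : Fin (n+1) × Fin (n+1) =>
        Fin.lastCases 0 (fun i => Fin.lastCases (q.1 i) (fun j => q.2.2 (i, j)) p.2) p.1)))
  · -- hi
    rintro ⟨k, m⟩ hkm
    simp only [Finset.mem_filter, Finset.mem_product, Fintype.mem_piFinset,
      Finset.mem_range] at hkm
    obtain ⟨⟨hk1, hm1⟩, hcond⟩ := hkm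
    rw [cnd_succ_iff] at hcond
    obtain ⟨hle, hkl, hzero, hinner⟩ := hcond
    simp only [Finset.mem_filter, Finset.mem_product, Fintype.mem_piFinset,
      Finset.mem_range]
    refine ⟨⟨⟨fun i => ?_, hle⟩, fun i => hk1 _, fun p => hm1 _⟩, hinner⟩
    have : m (i.castSucc, Fin.last n) ≤ ∑ i : Fin n, m (i.castSucc, Fin.last n) :=
      Finset.single_le_sum (f := fun j : Fin n => m (j.castSucc, Fin.last n))
        (fun j _ => Nat.zero_le _) (Finset.mem_univ i)
    omega
  · -- hj
    rintro ⟨x, k', m'⟩ hq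
    simp only [Finset.mem_filter, Finset.mem_product, Fintype.mem_piFinset,
      Finset.mem_range] at hq
    obtain ⟨⟨⟨hx1, hx2⟩, hk1, hm1⟩, hcond⟩ := hq
    simp only [Finset.mem_filter, Finset.mem_product, Fintype.mem_piFinset,
      Finset.mem_range]
    constructor
    · constructor
      · intro i
        induction i using Fin.lastCases with
        | last =>
          rw [Fin.snoc_last]
          omega
        | cast i =>
          rw [Fin.snoc_castSucc]
          exact hk1 i
      · rintro ⟨u, v⟩
        induction u using Fin.lastCases with
        | last => simp
        | cast i =>
          induction v using Fin.lastCases with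
          | last =>
            simp only [Fin.lastCases_castSucc, Fin.lastCases_last]
            have := hx1 i
            omega
          | cast j =>
            simp only [Fin.lastCases_castSucc]
            exact hm1 (i, j)
    · rw [cnd_succ_iff]
      have e0 : ∀ i : Fin n,
          (fun p : Fin (n+1) × Fin (n+1) =>
            Fin.lastCases 0 (fun i => Fin.lastCases (x i) (fun j => m' (i, j)) p.2) p.1)
            (i.castSucc, Fin.last n) = x i := by
        intro i
        simp
      refine ⟨?_, ?_, ?_, ?_⟩
      · simp only [e0]
        exact hx2
      · simp only [e0, Fin.snoc_last]
      · intro j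
        simp
      · have e1 : (fun i : Fin n =>
            (Fin.snoc k' (lv (Fin.last n) - ∑ i, x i) : Fin (n+1) → ℕ) i.castSucc) = k' := by
          funext i
          rw [Fin.snoc_castSucc]
        have e2 : (fun p : Fin n × Fin n =>
            (fun p : Fin (n+1) × Fin (n+1) =>
              Fin.lastCases 0 (fun i => Fin.lastCases (x i) (fun j => m' (i, j)) p.2) p.1)
              (p.1.castSucc, p.2.castSucc)) = m' := by
          funext p
          simp
        have e3 : (fun i : Fin n => lv i.castSucc +
            (fun p : Fin (n+1) × Fin (n+1) =>
              Fin.lastCases 0 (fun i => Fin.lastCases (x i) (fun j => m' (i, j)) p.2) p.1)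
              (i.castSucc, Fin.last n)) = (fun i => lv i.castSucc + x i) := by
          funext i
          simp
        rw [e1, e2, e3]
        exact hcond
  · -- left_inv
    rintro ⟨k, m⟩ hkm
    rw [Finset.mem_filter] at hkm
    obtain ⟨-, hcond⟩ := hkm
    rw [cnd_succ_iff] at hcond
    obtain ⟨hle, hkl, hzero, -⟩ := hcond
    dsimp only
    refine Prod.ext ?_ ?_
    · funext i
      dsimp only
      induction i using Fin.lastCases with
      | last =>
        rw [Fin.snoc_last]
        omega
      | cast i => exact Fin.snoc_castSucc _ _ _
    · funext p
      dsimp only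
      rcases p with ⟨u, v⟩
      induction u using Fin.lastCases with
      | last =>
        simp only [Fin.lastCases_last]
        exact (hzero v).symm
      | cast i =>
        induction v using Fin.lastCases with
        | last => simp
        | cast j => simp
  · -- right_inv
    rintro ⟨x, k', m'⟩ hq
    dsimp only
    refine Prod.ext ?_ (Prod.ext ?_ ?_)
    · funext i
      dsimp only
      simp
    · funext i
      dsimp only
      exact Fin.snoc_castSucc _ _ _
    · funext p
      dsimp only
      simp
  · -- values
    rintro ⟨k, m⟩ hkm
    exact trm_succ n m

lemma G_eq (n : ℕ) : ∀ lv : Fin n → ℕ, G n lv = X ^ (∑ i : Fin n, (i : ℕ) * lv i) := by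
  induction n with
  | zero =>
    intro lv
    rw [G_eq_sum 0 lv 0 (by simp)]
    have h1 : ∀ km ∈ (Fintype.piFinset fun _ : Fin 0 => Finset.range (0 + 1)) ×ˢ
        (Fintype.piFinset fun _ : Fin 0 × Fin 0 => Finset.range (0 + 1)),
        (if Cnd 0 lv km then trm 0 km.2 else 0) = 1 := by
      intro km _
      rw [if_pos, trm]
      · exact Finset.prod_of_isEmpty _
      · exact ⟨fun p _ => p.1.elim0, rfl, fun i => i.elim0⟩
    rw [Finset.sum_congr rfl h1, Finset.sum_const]
    simp
  | succ n ih =>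
    intro lv
    rw [step n lv]
    have hterm : ∀ x ∈ (Fintype.piFinset fun _ : Fin n =>
        Finset.range (lv (Fin.last n) + 1)).filter
        (fun x => ∑ i, x i ≤ lv (Fin.last n)),
        (∏ i, hc (x i)) * G n (fun i => lv i.castSucc + x i)
        = X ^ (∑ i : Fin n, (i : ℕ) * lv i.castSucc)
          * ∏ i : Fin n, X ^ ((i : ℕ) * x i) * hc (x i) := by
      intro x hx
      rw [ih]
      have hsum : (∑ i : Fin n, (i : ℕ) * (lv i.castSucc + x i))
          = (∑ i : Fin n, (i : ℕ) * lv i.castSucc) + ∑ i : Fin n, (i : ℕ) * x i := by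
        rw [← Finset.sum_add_distrib]
        exact Finset.sum_congr rfl fun i _ => by ring
      rw [hsum, pow_add, Finset.prod_mul_distrib, Finset.prod_pow_eq_pow_sum]
      ring
    rw [Finset.sum_congr rfl hterm, ← Finset.mul_sum,
      col n (lv (Fin.last n)) (lv (Fin.last n)) le_rfl, ← pow_add]
    congr 1
    rw [Fin.sum_univ_castSucc (f := fun i : Fin (n+1) => (i : ℕ) * lv i)]
    simp

/-- For every partition `λ` of length `l`, `F_λ = t^{n(λ)}` in `ℤ[t]`,
where `n(λ) = Σ_{i=1}^{l} (i−1) λᵢ`. -/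
theorem Fhl_eq_t_pow_n (lam : List ℕ) (h1 : lam.Pairwise (· ≥ ·)) (h2 : ∀ x ∈ lam, 0 < x) :
    Fhl lam = X ^ (∑ i : Fin lam.length, (i : ℕ) * lam.get i) := by
  rw [Fhl_eq_G, G_eq]
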